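/- Let X be a pseudometric space, λ ∈ (0,1) and C₀ ≥ 0. Let A : X ≃ X and f : X ≃ X be bijections such that dist(A⁻¹(x), A⁻¹(y)) ≤ λ·dist(x, y) for all x, y ∈ X, and dist(f⁻¹(x), A⁻¹(x)) ≤ C₀ for all x ∈ X. Fix C ≥ C₀/(1−λ) and for a subset L ⊆ X define η(L) = ⋂_{n≥0} (f⁻¹)^[n] '' (cthickening C ((A^[n]) '' L)). Then for every subset L ⊆ X one has f⁻¹ '' η(L) = η(A⁻¹ '' L). -/

import Mathlib

open Metric Set

/-- Equivariance of the generalized leaves: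
`f⁻¹ '' η(L) = η(A⁻¹ '' L)` where
`η(L) = ⋂ n, (f⁻¹)^[n] '' (cthickening C ((A^[n]) '' L))`. -/
theorem stmt_4 {X : Type*} [PseudoMetricSpace X] (l C₀ : ℝ)
    (hl0 : 0 < l) (hl1 : l < 1) (hC₀ : 0 ≤ C₀)
    (A f : X ≃ X)
    (hA : ∀ x y : X, dist (A.symm x) (A.symm y) ≤ l * dist x y)
    (hfA : ∀ x : X, dist (f.symm x) (A.symm x) ≤ C₀)
    (C : ℝ) (hC : C₀ / (1 - l) ≤ C) :
    ∀ L : Set X,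
      ⇑f.symm '' (⋂ n : ℕ, (⇑f.symm)^[n] '' (cthickening C ((⇑A)^[n] '' L))) =
        ⋂ n : ℕ, (⇑f.symm)^[n] '' (cthickening C ((⇑A)^[n] '' (⇑A.symm '' L))) := by
  have h1l : 0 < 1 - l := by linarith
  have hCle : l * C + C₀ ≤ C := by
    have h := (div_le_iff₀ h1l).mp hC
    nlinarith
  have hC0 : 0 ≤ C := le_trans (div_nonneg hC₀ h1l.le) hC
  -- key contraction step
  have key : ∀ M : Set X, ⇑f.symm '' cthickening C M ⊆ cthickening C (⇑A.symm '' M) := by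
    intro M
    rcases M.eq_empty_or_nonempty with rfl | hM
    · simp [cthickening_empty]
    have bridge : ∀ (s : Set X), s.Nonempty → ∀ x : X,
        (x ∈ cthickening C s ↔ infDist x s ≤ C) := by
      intro s hs x
      rw [mem_cthickening_iff, infDist,
        ENNReal.le_ofReal_iff_toReal_le (infEdist_ne_top hs) hC0]
    rintro _ ⟨x, hx, rfl⟩
    rw [bridge _ (hM.image _)]
    rw [bridge _ hM] at hx
    refine le_of_forall_pos_le_add ?_
    intro ε hε
    obtain ⟨y, hyM, hxy⟩ := (infDist_lt_iff hM).mp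
      (lt_of_le_of_lt hx (lt_add_of_pos_right C (div_pos hε hl0)))
    have h1 : infDist (f.symm x) (⇑A.symm '' M) ≤ dist (f.symm x) (A.symm y) :=
      infDist_le_dist_of_mem (mem_image_of_mem _ hyM)
    have h2 : dist (f.symm x) (A.symm y) ≤ C₀ + l * dist x y :=
      (dist_triangle _ (A.symm x) _).trans (add_le_add (hfA x) (hA x y))
    have h3 : l * dist x y ≤ l * (C + ε / l) := by
      have := hxy.le
      nlinarith
    have h4 : l * (C + ε / l) = l * C + ε := by field_simp
    nlinarith [h1, h2, h3]
  -- commuting A.symm past iterates of A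
  have hAcomm : ∀ (n : ℕ) (s : Set X), (⇑A)^[n] '' (⇑A.symm '' s) = ⇑A.symm '' ((⇑A)^[n] '' s) := by
    intro n s
    have hc : (⇑A)^[n] ∘ ⇑A.symm = ⇑A.symm ∘ (⇑A)^[n] := by
      funext x
      simp only [Function.comp_apply]
      induction n with
      | zero => simp
      | succ k ih =>
        rw [Function.iterate_succ_apply', Function.iterate_succ_apply', ih,
          Equiv.symm_apply_apply, Equiv.apply_symm_apply]
    rw [← Set.image_comp, hc, Set.image_comp]
  -- commuting f.symm past its own iterates
  have hfcomm : ∀ (n : ℕ) (s : Set X),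
      ⇑f.symm '' ((⇑f.symm)^[n] '' s) = (⇑f.symm)^[n] '' (⇑f.symm '' s) := by
    intro n s
    rw [← Set.image_comp, ← Set.image_comp, ← Function.iterate_succ, Function.iterate_succ']
  intro L
  rw [Set.image_iInter f.symm.bijective]
  apply subset_antisymm
  · refine Set.iInter_mono fun n => ?_
    rw [hfcomm]
    refine Set.image_mono ?_
    rw [hAcomm]
    exact key _
  · refine Set.subset_iInter fun n => ?_
    refine (Set.iInter_subset _ (n + 1)).trans ?_
    have h5 : (⇑A)^[n + 1] '' (⇑A.symm '' L) = (⇑A)^[n] '' L := by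
      rw [Function.iterate_succ, Set.image_comp, Equiv.image_symm_image]
    rw [h5, hfcomm, ← Set.image_comp, ← Function.iterate_succ, Function.iterate_succ',
      Set.image_comp, hfcomm]
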